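/- arXiv:2506.19821 — 2 statements merged into one kernel-verified Lean document; each statement's English description precedes it below -/
import Mathlib

section
/- For σ_r = σ_c the case of a square matrix A ∈ ℝ^{n×n} with rows and columns permuted by the same permutation σ, the total ℓ^p von Neumann stress equals Σ_{(i,k)∈A_N} (ω^R_{ik} + ω^C_{ik}), where A_N is the set of consecutive pairs under σ, ω^R_{ik} = 2Σ_j|a_{ij}−a_{kj}|^p and ω^C_{ik} = 2Σ_j|a_{ji}−a_{jk}|^p. Hence coordinated seriation is equivalent to a single minimum-weight Hamiltonian path with summed weights. -/
open Finset

/-- Total ℓᵖ stress of a matrix `B` under the von Neumann neighborhood. -/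
noncomputable def stressVN (n m : ℕ) (p : ℝ) (B : Fin n → Fin m → ℝ) : ℝ :=
  ∑ k : Fin n, ∑ l : Fin m, ∑ k' : Fin n, ∑ l' : Fin m,
    if ((k' : ℤ) - (k : ℤ)) ^ 2 + ((l' : ℤ) - (l : ℤ)) ^ 2 = 1 then
      |B k l - B k' l'| ^ p
    else 0

/-- Weight of the Hamiltonian path induced by permutation `σ` for edge weights `ω`. -/
noncomputable def pathWeight (n : ℕ) (ω : Fin n → Fin n → ℝ)
    (σ : Equiv.Perm (Fin n)) : ℝ :=
  ∑ i : Fin n, ∑ k : Fin n, if (σ k : ℕ) = (σ i : ℕ) + 1 then ω i k else 0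


lemma int_sq_iff (a b : ℤ) :
    a ^ 2 + b ^ 2 = 1 ↔ (a = 0 ∧ b ^ 2 = 1) ∨ (a ^ 2 = 1 ∧ b = 0) := by
  constructor
  · intro h
    have ha : a ^ 2 ≤ 1 := by nlinarith [sq_nonneg b]
    have hb : b ^ 2 ≤ 1 := by nlinarith [sq_nonneg a]
    have ha1 : -1 ≤ a := by nlinarith
    have ha2 : a ≤ 1 := by nlinarith
    have hb1 : -1 ≤ b := by nlinarith
    have hb2 : b ≤ 1 := by nlinarith
    interval_cases a <;> interval_cases b <;> revert h <;> norm_num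
  · rintro (⟨h1, h2⟩ | ⟨h1, h2⟩) <;> simp [h1, h2]

lemma ite_or_split (P Q : Prop) [Decidable P] [Decidable Q] (h : ¬(P ∧ Q)) (x : ℝ) :
    (if P ∨ Q then x else 0) = (if P then x else 0) + (if Q then x else 0) := by
  by_cases hP : P <;> by_cases hQ : Q <;> simp_all

lemma sum_ite_const {α : Type*} [Fintype α] (P : Prop) [Decidable P] (f : α → ℝ) :
    ∑ a : α, (if P then f a else 0) = if P then ∑ a : α, f a else 0 := by
  split_ifs <;> simp

lemma sq_one_iff (d : ℤ) : d ^ 2 = 1 ↔ d = 1 ∨ d = -1 := by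
  constructor
  · intro h
    have : (d - 1) * (d + 1) = 0 := by ring_nf; omega
    rcases mul_eq_zero.mp this with h | h
    · left; omega
    · right; omega
  · rintro (h | h) <;> simp [h]

lemma sum_adj (n : ℕ) (σ : Equiv.Perm (Fin n)) (g : Fin n → Fin n → ℝ)
    (hg : ∀ x y, g x y = g y x) :
    ∑ l : Fin n, ∑ l' : Fin n,
      (if ((l' : ℤ) - (l : ℤ)) ^ 2 = 1 then g (σ.symm l) (σ.symm l') else 0)
    = ∑ i : Fin n, ∑ k : Fin n,
        (if (σ k : ℕ) = (σ i : ℕ) + 1 then 2 * g i k else 0) := by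
  have step1 : ∑ l : Fin n, ∑ l' : Fin n,
      (if ((l' : ℤ) - (l : ℤ)) ^ 2 = 1 then g (σ.symm l) (σ.symm l') else 0)
      = ∑ i : Fin n, ∑ k : Fin n,
        (if (((σ k : ℕ) : ℤ) - ((σ i : ℕ) : ℤ)) ^ 2 = 1 then g i k else 0) := by
    rw [← Equiv.sum_comp σ (fun l => ∑ l' : Fin n,
      (if ((l' : ℤ) - (l : ℤ)) ^ 2 = 1 then g (σ.symm l) (σ.symm l') else 0))]
    refine Finset.sum_congr rfl fun i _ => ?_
    rw [← Equiv.sum_comp σ (fun l' =>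
      (if ((l' : ℤ) - ((σ i : Fin n) : ℤ)) ^ 2 = 1 then g (σ.symm (σ i)) (σ.symm l') else 0))]
    simp [Equiv.symm_apply_apply]
  rw [step1]
  have step2 : ∀ i k : Fin n,
      (if (((σ k : ℕ) : ℤ) - ((σ i : ℕ) : ℤ)) ^ 2 = 1 then g i k else 0)
      = (if (σ k : ℕ) = (σ i : ℕ) + 1 then g i k else 0)
        + (if (σ i : ℕ) = (σ k : ℕ) + 1 then g i k else 0) := by
    intro i k
    have h1 : ((((σ k : ℕ) : ℤ) - ((σ i : ℕ) : ℤ)) ^ 2 = 1)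
        ↔ ((σ k : ℕ) = (σ i : ℕ) + 1 ∨ (σ i : ℕ) = (σ k : ℕ) + 1) := by
      rw [sq_one_iff]; omega
    rw [if_congr h1 rfl rfl, ite_or_split _ _ (by omega)]
  simp only [step2, Finset.sum_add_distrib]
  have step3 : ∑ i : Fin n, ∑ k : Fin n, (if (σ i : ℕ) = (σ k : ℕ) + 1 then g i k else 0)
      = ∑ i : Fin n, ∑ k : Fin n, (if (σ k : ℕ) = (σ i : ℕ) + 1 then g i k else 0) := by
    rw [Finset.sum_comm]
    exact Finset.sum_congr rfl fun i _ => Finset.sum_congr rfl fun k _ => by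
      rw [hg i k]
  rw [step3, ← Finset.sum_add_distrib]
  refine Finset.sum_congr rfl fun i _ => ?_
  rw [← Finset.sum_add_distrib]
  refine Finset.sum_congr rfl fun k _ => ?_
  split_ifs <;> ring

lemma pointwise (n : ℕ) (k k' l l' : Fin n) (x : ℝ) :
    (if ((k' : ℤ) - (k : ℤ)) ^ 2 + ((l' : ℤ) - (l : ℤ)) ^ 2 = 1 then x else 0)
    = (if k' = k then (if ((l' : ℤ) - (l : ℤ)) ^ 2 = 1 then x else 0) else 0)
      + (if l' = l then (if ((k' : ℤ) - (k : ℤ)) ^ 2 = 1 then x else 0) else 0) := by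
  have hk : (((k' : ℤ) - (k : ℤ)) = 0) ↔ k' = k := by
    rw [sub_eq_zero]
    exact ⟨fun h => Fin.ext (Int.natCast_inj.mp h), fun h => by rw [h]⟩
  have hl : (((l' : ℤ) - (l : ℤ)) = 0) ↔ l' = l := by
    rw [sub_eq_zero]
    exact ⟨fun h => Fin.ext (Int.natCast_inj.mp h), fun h => by rw [h]⟩
  have h : (((k' : ℤ) - (k : ℤ)) ^ 2 + ((l' : ℤ) - (l : ℤ)) ^ 2 = 1)
      ↔ ((k' = k ∧ ((l' : ℤ) - (l : ℤ)) ^ 2 = 1)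
        ∨ (l' = l ∧ ((k' : ℤ) - (k : ℤ)) ^ 2 = 1)) := by
    rw [int_sq_iff, ← hk, ← hl]; tauto
  rw [if_congr h rfl rfl, ite_or_split, ite_and, ite_and]
  rintro ⟨⟨h1, h2⟩, ⟨h3, h4⟩⟩
  rw [← hk] at h1
  rw [h1] at h4
  norm_num at h4

lemma key (n : ℕ) (p : ℝ) (A : Fin n → Fin n → ℝ) (σ : Equiv.Perm (Fin n)) :
    stressVN n n p (fun k l => A (σ.symm k) (σ.symm l)) =
      ∑ i : Fin n, ∑ k : Fin n,
        if (σ k : ℕ) = (σ i : ℕ) + 1 then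
          (2 * ∑ j : Fin n, |A i j - A k j| ^ p)
            + (2 * ∑ j : Fin n, |A j i - A j k| ^ p)
        else 0 := by
  simp only [stressVN]
  simp only [pointwise]
  simp only [Finset.sum_add_distrib]
  -- collapse the degenerate sums
  simp only [sum_ite_const, Finset.sum_ite_eq', Finset.mem_univ, if_true]
  have hS1 : ∑ k : Fin n, ∑ l : Fin n, ∑ l' : Fin n,
      (if ((l' : ℤ) - (l : ℤ)) ^ 2 = 1
        then |A (σ.symm k) (σ.symm l) - A (σ.symm k) (σ.symm l')| ^ p else 0)
      = ∑ i : Fin n, ∑ k : Fin n,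
        (if (σ k : ℕ) = (σ i : ℕ) + 1
          then 2 * ∑ j : Fin n, |A j i - A j k| ^ p else 0) := by
    rw [Finset.sum_comm]
    have h1 : ∀ l : Fin n, ∑ k : Fin n, ∑ l' : Fin n,
        (if ((l' : ℤ) - (l : ℤ)) ^ 2 = 1
          then |A (σ.symm k) (σ.symm l) - A (σ.symm k) (σ.symm l')| ^ p else 0)
        = ∑ l' : Fin n, (if ((l' : ℤ) - (l : ℤ)) ^ 2 = 1
            then (fun a b => ∑ j : Fin n, |A j a - A j b| ^ p) (σ.symm l) (σ.symm l')
            else 0) := by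
      intro l
      rw [Finset.sum_comm]
      refine Finset.sum_congr rfl fun l' _ => ?_
      rw [sum_ite_const]
      refine if_congr Iff.rfl ?_ rfl
      exact Equiv.sum_comp σ.symm (fun j => |A j (σ.symm l) - A j (σ.symm l')| ^ p)
    simp only [h1]
    exact sum_adj n σ (fun a b => ∑ j : Fin n, |A j a - A j b| ^ p) (fun x y => by
      refine Finset.sum_congr rfl fun j _ => ?_
      rw [abs_sub_comm])
  have hS2 : ∑ k : Fin n, ∑ l : Fin n, ∑ k' : Fin n,
      (if ((k' : ℤ) - (k : ℤ)) ^ 2 = 1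
        then |A (σ.symm k) (σ.symm l) - A (σ.symm k') (σ.symm l)| ^ p else 0)
      = ∑ i : Fin n, ∑ k : Fin n,
        (if (σ k : ℕ) = (σ i : ℕ) + 1
          then 2 * ∑ j : Fin n, |A i j - A k j| ^ p else 0) := by
    have h1 : ∀ k : Fin n, ∑ l : Fin n, ∑ k' : Fin n,
        (if ((k' : ℤ) - (k : ℤ)) ^ 2 = 1
          then |A (σ.symm k) (σ.symm l) - A (σ.symm k') (σ.symm l)| ^ p else 0)
        = ∑ k' : Fin n, (if ((k' : ℤ) - (k : ℤ)) ^ 2 = 1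
            then (fun a b => ∑ j : Fin n, |A a j - A b j| ^ p) (σ.symm k) (σ.symm k')
            else 0) := by
      intro k
      rw [Finset.sum_comm]
      refine Finset.sum_congr rfl fun k' _ => ?_
      rw [sum_ite_const]
      refine if_congr Iff.rfl ?_ rfl
      exact Equiv.sum_comp σ.symm (fun j => |A (σ.symm k) j - A (σ.symm k') j| ^ p)
    simp only [h1]
    exact sum_adj n σ (fun a b => ∑ j : Fin n, |A a j - A b j| ^ p) (fun x y => by
      refine Finset.sum_congr rfl fun j _ => ?_
      rw [abs_sub_comm])
  rw [hS1, hS2, ← Finset.sum_add_distrib]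
  refine Finset.sum_congr rfl fun i _ => ?_
  rw [← Finset.sum_add_distrib]
  refine Finset.sum_congr rfl fun k _ => ?_
  split_ifs <;> ring


/-- For a square matrix with rows and columns permuted by the same permutation `σ`,
the total ℓᵖ von Neumann stress equals `Σ_{(i,k)∈A_N} (ω^R_{ik} + ω^C_{ik})` over
consecutive pairs; hence coordinated seriation is a single minimum-weight
Hamiltonian path problem with summed weights. -/
theorem stressVN_coordinated_eq_hamiltonian (n : ℕ) (hn : 1 ≤ n) (p : ℝ)
    (hp : 1 ≤ p) (A : Fin n → Fin n → ℝ) :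
    (∀ σ : Equiv.Perm (Fin n),
      stressVN n n p (fun k l => A (σ.symm k) (σ.symm l)) =
        ∑ i : Fin n, ∑ k : Fin n,
          if (σ k : ℕ) = (σ i : ℕ) + 1 then
            (2 * ∑ j : Fin n, |A i j - A k j| ^ p)
              + (2 * ∑ j : Fin n, |A j i - A j k| ^ p)
          else 0) ∧
    sInf {s : ℝ | ∃ σ : Equiv.Perm (Fin n),
        s = stressVN n n p (fun k l => A (σ.symm k) (σ.symm l))} =
      sInf {w : ℝ | ∃ σ : Equiv.Perm (Fin n),
        w = pathWeight n (fun i k =>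
          (2 * ∑ j : Fin n, |A i j - A k j| ^ p)
            + (2 * ∑ j : Fin n, |A j i - A j k| ^ p)) σ} := by
  refine ⟨fun σ => key n p A σ, ?_⟩
  congr 1
  ext s
  simp only [Set.mem_setOf_eq, pathWeight]
  exact exists_congr fun σ => by rw [key n p A σ]
end

section
/- Under the Moore neighborhood, the total ℓ^p stress of a matrix permuted by (σ_r, σ_c) equals the von Neumann stress plus 2·Σ_{(i,k)∈A_N} Σ_{(j,ℓ)∈A_M} (|a_{ij} − a_{kℓ}|^p + |a_{iℓ} − a_{kj}|^p), where A_N and A_M are the sets of consecutive row pairs and consecutive column pairs, respectively; in particular the Moore stress is not separable into independent row and column contributions. -/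
open Finset

/-- Total ℓᵖ stress under the Moore neighborhood:
cells `(k',ℓ')` with `max(|k−k'|,|ℓ−ℓ'|) = 1`. -/
noncomputable def stressMoore (n m : ℕ) (p : ℝ) (B : Fin n → Fin m → ℝ) : ℝ :=
  ∑ k : Fin n, ∑ l : Fin m, ∑ k' : Fin n, ∑ l' : Fin m,
    if max |(k' : ℤ) - (k : ℤ)| |(l' : ℤ) - (l : ℤ)| = 1 then
      |B k l - B k' l'| ^ p
    else 0

private lemma ite_split (a b : ℤ) (x : ℝ) :
    (if max |a| |b| = 1 then x else 0) =
      (if a ^ 2 + b ^ 2 = 1 then x else 0) +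
      (((if a = 1 ∧ b = 1 then x else 0) + (if a = 1 ∧ b = -1 then x else 0)) +
       ((if a = -1 ∧ b = 1 then x else 0) + (if a = -1 ∧ b = -1 then x else 0))) := by
  by_cases ha : |a| ≤ 1
  · by_cases hb : |b| ≤ 1
    · rw [abs_le] at ha hb
      have ha' : a = -1 ∨ a = 0 ∨ a = 1 := by omega
      have hb' : b = -1 ∨ b = 0 ∨ b = 1 := by omega
      rcases ha' with h|h|h <;> rcases hb' with h'|h'|h' <;> subst h <;> subst h' <;> norm_num
    · push_neg at hb
      have hb1 : b ≠ 1 := by rintro rfl; norm_num at hb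
      have hb2 : b ≠ -1 := by rintro rfl; norm_num at hb
      have hbs : 1 < b ^ 2 := by rw [← sq_abs]; nlinarith
      have hm : max |a| |b| ≠ 1 := by
        have h := le_max_right |a| |b|
        intro h'; rw [h'] at h; linarith
      have hv : a ^ 2 + b ^ 2 ≠ 1 := by nlinarith [sq_nonneg a]
      simp [hm, hv, hb1, hb2]
  · push_neg at ha
    have h1 : a ≠ 1 := by rintro rfl; norm_num at ha
    have h2 : a ≠ -1 := by rintro rfl; norm_num at ha
    have has : 1 < a ^ 2 := by rw [← sq_abs]; nlinarith
    have hm : max |a| |b| ≠ 1 := by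
      have h := le_max_left |a| |b|
      intro h'; rw [h'] at h; linarith
    have hv : a ^ 2 + b ^ 2 ≠ 1 := by nlinarith [sq_nonneg b]
    simp [hm, hv, h1, h2]

private lemma quad_reindex {n m : ℕ} (σr : Equiv.Perm (Fin n)) (σc : Equiv.Perm (Fin m))
    (f : Fin n → Fin m → Fin n → Fin m → ℝ) :
    (∑ k : Fin n, ∑ l : Fin m, ∑ k' : Fin n, ∑ l' : Fin m, f k l k' l')
      = ∑ i : Fin n, ∑ j : Fin m, ∑ i' : Fin n, ∑ j' : Fin m,
          f (σr i) (σc j) (σr i') (σc j') := by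
  rw [← Equiv.sum_comp σr fun k => ∑ l, ∑ k', ∑ l', f k l k' l']
  refine sum_congr rfl fun i _ => ?_
  rw [← Equiv.sum_comp σc fun l => ∑ k', ∑ l', f (σr i) l k' l']
  refine sum_congr rfl fun j _ => ?_
  rw [← Equiv.sum_comp σr fun k' => ∑ l', f (σr i) (σc j) k' l']
  refine sum_congr rfl fun i' _ => ?_
  rw [← Equiv.sum_comp σc fun l' => f (σr i) (σc j) (σr i') l']

private lemma sum4_swap12 {α β γ δ : Type*} [Fintype α] [Fintype β] [Fintype γ] [Fintype δ]
    (f : α → β → γ → δ → ℝ) :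
    (∑ a : α, ∑ b : β, ∑ c : γ, ∑ d : δ, f a b c d)
      = ∑ b : β, ∑ a : α, ∑ c : γ, ∑ d : δ, f a b c d :=
  Finset.sum_comm

private lemma sum4_swap23 {α β γ δ : Type*} [Fintype α] [Fintype β] [Fintype γ] [Fintype δ]
    (f : α → β → γ → δ → ℝ) :
    (∑ a : α, ∑ b : β, ∑ c : γ, ∑ d : δ, f a b c d)
      = ∑ a : α, ∑ c : γ, ∑ b : β, ∑ d : δ, f a b c d :=
  sum_congr rfl fun a _ => Finset.sum_comm

private lemma sum4_swap34 {α β γ δ : Type*} [Fintype α] [Fintype β] [Fintype γ] [Fintype δ]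
    (f : α → β → γ → δ → ℝ) :
    (∑ a : α, ∑ b : β, ∑ c : γ, ∑ d : δ, f a b c d)
      = ∑ a : α, ∑ b : β, ∑ d : δ, ∑ c : γ, f a b c d :=
  sum_congr rfl fun a _ => sum_congr rfl fun b _ => Finset.sum_comm

/-- Under the Moore neighborhood, the total ℓᵖ stress of the permuted matrix equals
the von Neumann stress plus
`2 Σ_{(i,k)∈A_N} Σ_{(j,ℓ)∈A_M} (|a_{ij} − a_{kℓ}|ᵖ + |a_{iℓ} − a_{kj}|ᵖ)`. -/
theorem stressMoore_decomposition (n m : ℕ) (p : ℝ) (hp : 1 ≤ p)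
    (A : Fin n → Fin m → ℝ) (σr : Equiv.Perm (Fin n)) (σc : Equiv.Perm (Fin m)) :
    stressMoore n m p (fun k l => A (σr.symm k) (σc.symm l)) =
      stressVN n m p (fun k l => A (σr.symm k) (σc.symm l)) +
        2 * ∑ i : Fin n, ∑ k : Fin n, ∑ j : Fin m, ∑ l : Fin m,
          if (σr k : ℕ) = (σr i : ℕ) + 1 ∧ (σc l : ℕ) = (σc j : ℕ) + 1 then
            |A i j - A k l| ^ p + |A i l - A k j| ^ p
          else 0 := by
  set B : Fin n → Fin m → ℝ := fun k l => A (σr.symm k) (σc.symm l) with hBdef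
  have e1 : stressMoore n m p B =
      stressVN n m p B +
        (((∑ k : Fin n, ∑ l : Fin m, ∑ k' : Fin n, ∑ l' : Fin m,
            if (k' : ℤ) - (k : ℤ) = 1 ∧ (l' : ℤ) - (l : ℤ) = 1 then |B k l - B k' l'| ^ p else 0)
          + (∑ k : Fin n, ∑ l : Fin m, ∑ k' : Fin n, ∑ l' : Fin m,
            if (k' : ℤ) - (k : ℤ) = 1 ∧ (l' : ℤ) - (l : ℤ) = -1 then |B k l - B k' l'| ^ p else 0))
         + ((∑ k : Fin n, ∑ l : Fin m, ∑ k' : Fin n, ∑ l' : Fin m,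
            if (k' : ℤ) - (k : ℤ) = -1 ∧ (l' : ℤ) - (l : ℤ) = 1 then |B k l - B k' l'| ^ p else 0)
          + (∑ k : Fin n, ∑ l : Fin m, ∑ k' : Fin n, ∑ l' : Fin m,
            if (k' : ℤ) - (k : ℤ) = -1 ∧ (l' : ℤ) - (l : ℤ) = -1 then |B k l - B k' l'| ^ p else 0))) := by
    simp only [stressMoore, stressVN, ← Finset.sum_add_distrib]
    refine sum_congr rfl fun k _ => sum_congr rfl fun l _ => sum_congr rfl fun k' _ =>
      sum_congr rfl fun l' _ => ?_
    exact ite_split _ _ _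
  have hT1 : (∑ k : Fin n, ∑ l : Fin m, ∑ k' : Fin n, ∑ l' : Fin m,
      if (k' : ℤ) - (k : ℤ) = 1 ∧ (l' : ℤ) - (l : ℤ) = 1 then |B k l - B k' l'| ^ p else 0)
      = ∑ i : Fin n, ∑ k : Fin n, ∑ j : Fin m, ∑ l : Fin m,
          if (σr k : ℕ) = (σr i : ℕ) + 1 ∧ (σc l : ℕ) = (σc j : ℕ) + 1 then
            |A i j - A k l| ^ p else 0 := by
    refine Eq.trans (quad_reindex σr σc _) ?_
    refine Eq.trans (sum4_swap23 _) ?_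
    refine sum_congr rfl fun a _ => sum_congr rfl fun b _ => sum_congr rfl fun c _ =>
      sum_congr rfl fun d _ => ?_
    simp only [hBdef, Equiv.symm_apply_apply]
    exact if_congr (by constructor <;> rintro ⟨h1, h2⟩ <;> exact ⟨by omega, by omega⟩) rfl rfl
  have hT2 : (∑ k : Fin n, ∑ l : Fin m, ∑ k' : Fin n, ∑ l' : Fin m,
      if (k' : ℤ) - (k : ℤ) = 1 ∧ (l' : ℤ) - (l : ℤ) = -1 then |B k l - B k' l'| ^ p else 0)
      = ∑ i : Fin n, ∑ k : Fin n, ∑ j : Fin m, ∑ l : Fin m,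
          if (σr k : ℕ) = (σr i : ℕ) + 1 ∧ (σc l : ℕ) = (σc j : ℕ) + 1 then
            |A i l - A k j| ^ p else 0 := by
    refine Eq.trans (quad_reindex σr σc _) ?_
    refine Eq.trans (sum4_swap23 _) ?_
    refine Eq.trans (sum4_swap34 _) ?_
    refine sum_congr rfl fun a _ => sum_congr rfl fun b _ => sum_congr rfl fun c _ =>
      sum_congr rfl fun d _ => ?_
    simp only [hBdef, Equiv.symm_apply_apply]
    exact if_congr (by constructor <;> rintro ⟨h1, h2⟩ <;> exact ⟨by omega, by omega⟩) rfl rfl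
  have hT3 : (∑ k : Fin n, ∑ l : Fin m, ∑ k' : Fin n, ∑ l' : Fin m,
      if (k' : ℤ) - (k : ℤ) = -1 ∧ (l' : ℤ) - (l : ℤ) = 1 then |B k l - B k' l'| ^ p else 0)
      = ∑ i : Fin n, ∑ k : Fin n, ∑ j : Fin m, ∑ l : Fin m,
          if (σr k : ℕ) = (σr i : ℕ) + 1 ∧ (σc l : ℕ) = (σc j : ℕ) + 1 then
            |A i l - A k j| ^ p else 0 := by
    refine Eq.trans (quad_reindex σr σc _) ?_
    refine Eq.trans (sum4_swap23 _) ?_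
    refine Eq.trans (sum4_swap12 _) ?_
    refine sum_congr rfl fun a _ => sum_congr rfl fun b _ => sum_congr rfl fun c _ =>
      sum_congr rfl fun d _ => ?_
    simp only [hBdef, Equiv.symm_apply_apply]
    rw [abs_sub_comm]
    exact if_congr (by constructor <;> rintro ⟨h1, h2⟩ <;> exact ⟨by omega, by omega⟩) rfl rfl
  have hT4 : (∑ k : Fin n, ∑ l : Fin m, ∑ k' : Fin n, ∑ l' : Fin m,
      if (k' : ℤ) - (k : ℤ) = -1 ∧ (l' : ℤ) - (l : ℤ) = -1 then |B k l - B k' l'| ^ p else 0)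
      = ∑ i : Fin n, ∑ k : Fin n, ∑ j : Fin m, ∑ l : Fin m,
          if (σr k : ℕ) = (σr i : ℕ) + 1 ∧ (σc l : ℕ) = (σc j : ℕ) + 1 then
            |A i j - A k l| ^ p else 0 := by
    refine Eq.trans (quad_reindex σr σc _) ?_
    refine Eq.trans (sum4_swap23 _) ?_
    refine Eq.trans (sum4_swap12 _) ?_
    refine Eq.trans (sum4_swap34 _) ?_
    refine sum_congr rfl fun a _ => sum_congr rfl fun b _ => sum_congr rfl fun c _ =>
      sum_congr rfl fun d _ => ?_
    simp only [hBdef, Equiv.symm_apply_apply]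
    rw [abs_sub_comm]
    exact if_congr (by constructor <;> rintro ⟨h1, h2⟩ <;> exact ⟨by omega, by omega⟩) rfl rfl
  have hRHS : (∑ i : Fin n, ∑ k : Fin n, ∑ j : Fin m, ∑ l : Fin m,
      if (σr k : ℕ) = (σr i : ℕ) + 1 ∧ (σc l : ℕ) = (σc j : ℕ) + 1 then
        |A i j - A k l| ^ p + |A i l - A k j| ^ p else 0)
      = (∑ i : Fin n, ∑ k : Fin n, ∑ j : Fin m, ∑ l : Fin m,
          if (σr k : ℕ) = (σr i : ℕ) + 1 ∧ (σc l : ℕ) = (σc j : ℕ) + 1 then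
            |A i j - A k l| ^ p else 0)
        + ∑ i : Fin n, ∑ k : Fin n, ∑ j : Fin m, ∑ l : Fin m,
          if (σr k : ℕ) = (σr i : ℕ) + 1 ∧ (σc l : ℕ) = (σc j : ℕ) + 1 then
            |A i l - A k j| ^ p else 0 := by
    simp only [← Finset.sum_add_distrib]
    refine sum_congr rfl fun i _ => sum_congr rfl fun k _ => sum_congr rfl fun j _ =>
      sum_congr rfl fun l _ => ?_
    split_ifs <;> ring
  rw [e1, hT1, hT2, hT3, hT4, hRHS]
  ring
end
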